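/- Let n be an odd integer with n ≡ ±1 (mod 3), h an integer, and w = max(ν_3(n-1), ν_3(n+1)). Then T_n(1 + 3h) ≡ 1 + 3h (mod 3^{w+1}) and T_n(-1 + 3h) ≡ -1 + 3h (mod 3^{w+1}). -/

import Mathlib

open Polynomial Polynomial.Chebyshev

lemma aux_pow3 {R : Type*} [CommRing R] (u e : R) (he : (u - 1)^2 = 3 * e) :
    ∀ w m : ℕ, ∃ c, u ^ (3 ^ w * m) - 1 = 3 ^ w * (u - 1) * c := by
  intro w
  induction w with
  | zero =>
    intro m
    exact ⟨∑ i ∈ Finset.range m, u ^ i, by rw [mul_comm ((3:R)^0 * (u-1))]; simp [geom_sum_mul]⟩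
  | succ w ih =>
    intro m
    obtain ⟨c, hc⟩ := ih m
    have hu : u ^ (3 ^ w * m) = 1 + 3 ^ w * (u - 1) * c := by linear_combination hc
    refine ⟨c * (((3:R)^w)^2 * e * c^2 + 3^w * (u - 1) * c + 1), ?_⟩
    have hexp : 3 ^ (w+1) * m = (3 ^ w * m) * 3 := by ring
    rw [hexp, pow_mul, hu, pow_succ]
    linear_combination (((3:R)^w)^3 * c^3 * (u-1)) * he

lemma cheb_sum {S : Type*} [CommRing S] (x u v : S) (huv : u * v = 1)
    (hsum : u + v = 2 * x) : ∀ k : ℕ, u ^ k + v ^ k = 2 * (T S k).eval x := by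
  have key : ∀ k : ℕ, (u ^ k + v ^ k = 2 * (T S k).eval x)
      ∧ (u ^ (k+1) + v ^ (k+1) = 2 * (T S (k+1)).eval x) := by
    intro k
    induction k with
    | zero => exact ⟨by norm_num [T_zero], by simpa [T_one] using hsum⟩
    | succ k ih =>
      refine ⟨ih.2, ?_⟩
      have hrec : u ^ (k+1+1) + v ^ (k+1+1)
          = (u + v) * (u ^ (k+1) + v ^ (k+1)) - (u * v) * (u ^ k + v ^ k) := by ring
      have hT : T S ((k:ℤ) + 2) = 2 * X * T S ((k:ℤ) + 1) - T S (k:ℤ) := T_add_two S k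
      rw [hrec, huv, hsum, ih.1, ih.2,
        show ((k+1:ℕ):ℤ) + 1 = (k:ℤ) + 2 from by push_cast; ring, hT]
      simp only [eval_sub, eval_mul, eval_ofNat, eval_X]
      ring
  exact fun k => (key k).1

lemma cheb_odd {S : Type*} [CommRing S] (y : S) :
    ∀ k : ℕ, (T S k).eval (-y) = (-1) ^ k * (T S k).eval y := by
  have key : ∀ k : ℕ, ((T S k).eval (-y) = (-1) ^ k * (T S k).eval y)
      ∧ ((T S (k+1)).eval (-y) = (-1) ^ (k+1) * (T S (k+1)).eval y) := by
    intro k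
    induction k with
    | zero => simp [T_zero, T_one]
    | succ k ih =>
      refine ⟨ih.2, ?_⟩
      have hT : T S ((k:ℤ) + 2) = 2 * X * T S ((k:ℤ) + 1) - T S (k:ℤ) := T_add_two S k
      rw [show ((k+1:ℕ):ℤ) + 1 = (k:ℤ) + 2 from by push_cast; ring, hT]
      simp only [eval_sub, eval_mul, eval_ofNat, eval_X]
      rw [ih.1, ih.2]
      ring
  exact fun k => (key k).1

lemma cheb_key (n : ℤ) (hn : 0 < n) (hmod : ¬ ((3 : ℤ) ∣ n)) (w : ℕ)
    (hw : w = max (padicValInt 3 (n - 1)) (padicValInt 3 (n + 1))) (h : ℤ) :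
    (T ℤ n).eval (1 + 3 * h) ≡ 1 + 3 * h [ZMOD 3 ^ (w + 1)] := by
  haveI : Fact (Nat.Prime 3) := ⟨by norm_num⟩
  set x : ℤ := 1 + 3 * h with hx
  set d : ℤ := x ^ 2 - 1 with hd
  set u : ℤ√d := ⟨x, 1⟩ with hu
  set v : ℤ√d := ⟨x, -1⟩ with hv
  have huv : u * v = 1 := by
    rw [Zsqrtd.ext_iff]
    constructor
    · simp [hu, hv, Zsqrtd.re_mul, hd]; try ring
    · simp [hu, hv, Zsqrtd.im_mul]; try ring
  have hsum : u + v = 2 * (x : ℤ√d) := by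
    rw [Zsqrtd.ext_iff]
    constructor
    · simp [hu, hv, Zsqrtd.re_add, Zsqrtd.re_mul]; ring
    · simp [hu, hv, Zsqrtd.im_add, Zsqrtd.im_mul]
  have he : (u - 1)^2 = 3 * (⟨6*h^2 + 2*h, 2*h⟩ : ℤ√d) := by
    rw [Zsqrtd.ext_iff]
    constructor
    · simp [hu, Zsqrtd.re_mul, Zsqrtd.re_sub, Zsqrtd.im_sub, pow_two, hd, hx]; ring
    · simp [hu, Zsqrtd.im_mul, Zsqrtd.re_sub, Zsqrtd.im_sub, pow_two, hx]; ring
  set e : ℤ√d := ⟨6*h^2 + 2*h, 2*h⟩ with hee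
  -- natural number setup
  set N : ℕ := n.toNat with hNdef
  have hN : (N : ℤ) = n := Int.toNat_of_nonneg hn.le
  obtain ⟨K, hKN⟩ : ∃ K, N = K + 1 := by
    refine ⟨N - 1, ?_⟩; omega
  have hKn : ((K : ℕ) : ℤ) = n - 1 := by omega
  have hK2n : ((K + 2 : ℕ) : ℤ) = n + 1 := by push_cast; omega
  -- divisibility: 3^w divides K or K+2 (as naturals)
  have hdvd : 3 ^ w ∣ K ∨ 3 ^ w ∣ (K + 2) := by
    rcases max_choice (padicValInt 3 (n - 1)) (padicValInt 3 (n + 1)) with hm | hm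
    · left
      have hweq : w = padicValInt 3 (n - 1) := hw.trans hm
      have h1 : ((3:ℕ):ℤ) ^ w ∣ (K : ℤ) := by
        rw [hweq, hKn]; exact padicValInt_dvd _
      exact_mod_cast h1
    · right
      have hweq : w = padicValInt 3 (n + 1) := hw.trans hm
      have h1 : ((3:ℕ):ℤ) ^ w ∣ ((K + 2 : ℕ) : ℤ) := by
        rw [hweq, hK2n]; exact padicValInt_dvd _
      exact_mod_cast h1
  -- factorization of the product
  have hprod : ∃ z : ℤ√d, (u ^ (K+2) - 1) * (u ^ K - 1) = ((3^(w+1) : ℤ) : ℤ√d) * z := by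
    rcases hdvd with ⟨m, hm⟩ | ⟨m, hm⟩
    · obtain ⟨c, hc⟩ := aux_pow3 u e he w m
      obtain ⟨c', hc'⟩ := aux_pow3 u e he 0 (K+2)
      simp only [pow_zero, one_mul] at hc'
      rw [← hm] at hc
      refine ⟨e * c * c', ?_⟩
      rw [hc, hc']
      push_cast
      linear_combination ((3:ℤ√d)^w * c * c') * he
    · obtain ⟨c, hc⟩ := aux_pow3 u e he w m
      obtain ⟨c', hc'⟩ := aux_pow3 u e he 0 K
      simp only [pow_zero, one_mul] at hc'
      rw [← hm] at hc
      refine ⟨e * c * c', ?_⟩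
      rw [hc, hc']
      push_cast
      linear_combination ((3:ℤ√d)^w * c * c') * he
  obtain ⟨z, hz⟩ := hprod
  -- the main identity
  have h2 : u ^ K * v ^ K = 1 := by rw [← mul_pow, huv, one_pow]
  have main_id : u ^ (K+1) + v ^ (K+1) - (u + v)
      = v ^ (K+1) * ((u ^ (K+2) - 1) * (u ^ K - 1)) := by
    linear_combination (-(u^K*u - u)*(1 + (u*v - 1)) + v) * h2 + (-(u^K*u - u)) * huv
  -- relate to Chebyshev evaluation
  have hTS := cheb_sum ((x : ℤ√d)) u v huv hsum (K+1)
  have hind : ((K+1:ℕ):ℤ) = n := by push_cast; omega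
  have hmap : (T (ℤ√d) n).eval (x : ℤ√d) = (((T ℤ n).eval x : ℤ) : ℤ√d) := by
    rw [← map_T (Int.castRingHom (ℤ√d)) n, eval_map]
    simpa using Polynomial.eval₂_at_apply (p := T ℤ n) (Int.castRingHom (ℤ√d)) x
  have hcast : ((2 * (T ℤ n).eval x - 2 * x : ℤ) : ℤ√d)
      = ((3^(w+1) : ℤ) : ℤ√d) * (v^(K+1) * z) := by
    have l1 : ((2 * (T ℤ n).eval x - 2*x : ℤ) : ℤ√d)
        = 2 * (((T ℤ n).eval x : ℤ) : ℤ√d) - 2*(x:ℤ√d) := by push_cast; ring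
    rw [l1, ← hmap, ← hind, ← hTS, ← hsum, main_id, hz]
    ring
  have hre := congrArg Zsqrtd.re hcast
  rw [Zsqrtd.re_intCast, Zsqrtd.re_smul] at hre
  have hdvd2 : (3:ℤ)^(w+1) ∣ 2 * ((T ℤ n).eval x - x) :=
    ⟨(v^(K+1) * z).re, by linarith⟩
  have hcop : IsCoprime ((3:ℤ)^(w+1)) 2 :=
    IsCoprime.pow_left (by norm_num [Int.isCoprime_iff_gcd_eq_one])
  have hdvd3 : (3:ℤ)^(w+1) ∣ ((T ℤ n).eval x - x) :=
    hcop.dvd_of_dvd_mul_left hdvd2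
  exact Int.modEq_iff_dvd.mpr (dvd_sub_comm.mp hdvd3)

theorem chebyshev_eval_near_pm_one_modeq (n : ℤ) (hn : 0 < n) (hodd : Odd n)
    (hmod : ¬ ((3 : ℤ) ∣ n)) (h : ℤ)
    (w : ℕ) (hw : w = max (padicValInt 3 (n - 1)) (padicValInt 3 (n + 1))) :
    (T ℤ n).eval (1 + 3 * h) ≡ 1 + 3 * h [ZMOD 3 ^ (w + 1)] ∧
    (T ℤ n).eval (-1 + 3 * h) ≡ -1 + 3 * h [ZMOD 3 ^ (w + 1)] := by
  refine ⟨cheb_key n hn hmod w hw h, ?_⟩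
  have hN : (n.toNat : ℤ) = n := Int.toNat_of_nonneg hn.le
  have hoddN : Odd n.toNat := by
    rwa [← hN, Int.odd_coe_nat] at hodd
  have hpar := cheb_odd (S := ℤ) (1 + 3*(-h)) n.toNat
  rw [hoddN.neg_one_pow, hN] at hpar
  have harg : (-1 + 3*h : ℤ) = -(1 + 3*(-h)) := by ring
  rw [harg, hpar]
  simpa using (cheb_key n hn hmod w hw (-h)).neg
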